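/- The integral from 0 to 1 of (ln x)/(1+x^2) dx equals -G, where G = ∑_{k=0}^{∞} (-1)^k/(2k+1)^2 is Catalan's constant; moreover the integral from 1 to ∞ of (ln x)/(1+x^2) dx equals G, and consequently the integral from 0 to ∞ of (ln x)/(1+x^2) dx equals 0. -/

import Mathlib

open Real MeasureTheory Set Filter

private lemma abs_log_le' (x : ℝ) (hx : x ∈ Ioo (0:ℝ) 1) : |Real.log x| ≤ 2 * x ^ (-(1/2) : ℝ) := by
  obtain ⟨h0, h1⟩ := hx
  have hs : Real.log x = 2 * Real.log (x ^ ((1/2):ℝ)) := by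
    rw [Real.log_rpow h0]; ring
  have hneg : Real.log x < 0 := Real.log_neg h0 h1
  rw [abs_of_neg hneg]
  have h2 : Real.log (x ^ (-(1/2):ℝ)) ≤ x ^ (-(1/2):ℝ) - 1 :=
    Real.log_le_sub_one_of_pos (Real.rpow_pos_of_pos h0 _)
  have h3 : Real.log (x ^ (-(1/2):ℝ)) = -Real.log (x ^ ((1/2):ℝ)) := by
    rw [Real.log_rpow h0, Real.log_rpow h0]; ring
  nlinarith [Real.rpow_pos_of_pos h0 (-(1/2):ℝ)]

private lemma bound_integrable' : IntegrableOn (fun x : ℝ => 2 * x ^ (-(1/2) : ℝ)) (Ioo 0 1) := by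
  have := (intervalIntegral.intervalIntegrable_rpow' (a := 0) (b := 1) (r := -(1/2)) (by norm_num))
  rw [intervalIntegrable_iff_integrableOn_Ioo_of_le (by norm_num)] at this
  exact this.const_mul 2

private lemma pow_log_integrable' (n : ℕ) :
    IntegrableOn (fun x : ℝ => x ^ n * Real.log x) (Ioo 0 1) := by
  refine bound_integrable'.integrable.mono ?_ ?_
  · exact ((measurable_id.pow_const n).mul Real.measurable_log).aestronglyMeasurable
  · filter_upwards [ae_restrict_mem measurableSet_Ioo] with x hx
    have h1 : |x ^ n| ≤ 1 := by
      rw [abs_of_nonneg (pow_nonneg hx.1.le n)]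
      exact pow_le_one₀ hx.1.le hx.2.le
    have h2 := abs_log_le' x hx
    rw [Real.norm_eq_abs, Real.norm_eq_abs, abs_mul]
    calc |x ^ n| * |Real.log x| ≤ 1 * |Real.log x| :=
          mul_le_mul_of_nonneg_right h1 (abs_nonneg _)
      _ = |Real.log x| := one_mul _
      _ ≤ 2 * x ^ (-(1/2):ℝ) := h2
      _ ≤ |2 * x ^ (-(1/2):ℝ)| := le_abs_self _

private lemma integral_pow_log' (n : ℕ) :
    ∫ x in (0:ℝ)..1, x ^ n * Real.log x = -(1 / ((n:ℝ) + 1) ^ 2) := by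
  set m : ℝ := (n : ℝ) + 1 with hm
  have hm0 : m ≠ 0 := by positivity
  set F : ℝ → ℝ := fun x => x ^ (n+1) * Real.log x / m - x ^ (n+1) / m ^ 2 with hF
  have hF0 : F 0 = 0 := by simp [hF]
  have hderiv : ∀ x ∈ Ioo (0:ℝ) 1, HasDerivAt F (x ^ n * Real.log x) x := by
    intro x hx
    have hx0 : x ≠ 0 := hx.1.ne'
    have h1 : HasDerivAt (fun x : ℝ => x ^ (n+1) * Real.log x)
        (((n:ℝ)+1) * x ^ n * Real.log x + x ^ (n+1) * x⁻¹) x := by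
      have : HasDerivAt (fun x : ℝ => x ^ (n+1) * Real.log x) _ x :=
        (hasDerivAt_pow (n+1) x).mul (Real.hasDerivAt_log hx0)
      convert this using 1
      push_cast; ring
    have h2 : HasDerivAt F
        ((((n:ℝ)+1) * x ^ n * Real.log x + x ^ (n+1) * x⁻¹) / m
          - ((n:ℝ)+1) * x ^ n / m ^ 2) x :=
      (h1.div_const m).sub (((hasDerivAt_pow (n+1) x).div_const (m^2)).congr_deriv
        (by push_cast; ring))
    convert h2 using 1
    have hxp : x ^ (n+1) * x⁻¹ = x ^ n := by
      rw [pow_succ]; field_simp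
    rw [hxp, hm]
    field_simp
    ring
  have hcont : ContinuousOn F (Icc (0:ℝ) 1) := by
    intro x hx
    rcases eq_or_lt_of_le hx.1 with h | h
    · subst h
      have h1 : Tendsto (fun x : ℝ => Real.log x * x ^ ((n:ℝ)+1))
          (nhdsWithin 0 (Ioi 0)) (nhds 0) :=
        tendsto_log_mul_rpow_nhdsGT_zero (by positivity)
      have h2 : Tendsto (fun x : ℝ => x ^ (n+1) : ℝ → ℝ) (nhdsWithin 0 (Ioi 0)) (nhds 0) := by
        have := (continuous_pow (n+1)).tendsto (0:ℝ)
        simpa using this.mono_left nhdsWithin_le_nhds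
      have h1' : Tendsto (fun x : ℝ => x ^ (n+1) * Real.log x)
          (nhdsWithin 0 (Ioi 0)) (nhds 0) := by
        refine h1.congr' ?_
        filter_upwards [self_mem_nhdsWithin] with x (hx : x ∈ Ioi 0)
        rw [show ((n:ℝ)+1) = ((n+1:ℕ):ℝ) by push_cast; ring, Real.rpow_natCast]
        ring
      have htend : Tendsto F (nhdsWithin 0 (Ioi 0)) (nhds 0) := by
        have := (h1'.div_const m).sub (h2.div_const (m^2))
        simpa [hF] using this
      have hcw : ContinuousWithinAt F (Ioi 0) 0 := by
        rw [ContinuousWithinAt, hF0]; exact htend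
      refine (hcw.insert).mono ?_
      intro y hy
      rcases eq_or_lt_of_le hy.1 with h | h
      · exact Or.inl h.symm
      · exact Or.inr h
    · exact ContinuousAt.continuousWithinAt <| by
        fun_prop (disch := exact h.ne')
  have hint : IntervalIntegrable (fun x : ℝ => x ^ n * Real.log x) volume 0 1 := by
    rw [intervalIntegrable_iff_integrableOn_Ioo_of_le (by norm_num)]
    exact pow_log_integrable' n
  have := intervalIntegral.integral_eq_sub_of_hasDeriv_right_of_le (by norm_num) hcont
    (fun x hx => (hderiv x hx).hasDerivWithinAt) hint
  rw [this, hF0, hF]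
  simp [hm]

private lemma integral_Ioo_pow_log' (n : ℕ) :
    ∫ x in Ioo (0:ℝ) 1, x ^ n * Real.log x = -(1 / ((n:ℝ) + 1) ^ 2) := by
  rw [← integral_pow_log' n, intervalIntegral.integral_of_le (by norm_num),
    integral_Ioc_eq_integral_Ioo]

private lemma summable_aux' : Summable (fun k : ℕ => 1 / (2 * (k:ℝ) + 1) ^ 2) := by
  have h : Summable (fun k : ℕ => 1 / ((k:ℝ) + 1) ^ 2) := by
    have := (summable_nat_add_iff (f := fun n : ℕ => 1 / (n:ℝ) ^ 2) 1).mpr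
      (Real.summable_one_div_nat_pow.mpr one_lt_two)
    simpa using this
  refine h.of_nonneg_of_le (fun k => by positivity) (fun k => ?_)
  refine one_div_le_one_div_of_le (by positivity) ?_
  have : (0:ℝ) ≤ (k:ℝ) := Nat.cast_nonneg k
  nlinarith

private lemma tsum_eq_integrand' {x : ℝ} (hx : x ∈ Ioo (0:ℝ) 1) :
    ∑' k : ℕ, (-1:ℝ) ^ k * (x ^ (2*k) * Real.log x) = Real.log x / (1 + x ^ 2) := by
  have hnorm : ‖-x^2‖ < 1 := by
    rw [norm_neg, Real.norm_eq_abs, abs_of_nonneg (by positivity)]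
    nlinarith [hx.1, hx.2]
  have hg : ∑' k : ℕ, (-x^2) ^ k = (1 - (-x^2))⁻¹ := tsum_geometric_of_norm_lt_one hnorm
  calc ∑' k : ℕ, (-1:ℝ) ^ k * (x ^ (2*k) * Real.log x)
      = ∑' k : ℕ, (-x^2) ^ k * Real.log x := by
        congr 1; ext k; rw [neg_pow, pow_mul]; ring
    _ = (∑' k : ℕ, (-x^2) ^ k) * Real.log x := tsum_mul_right
    _ = Real.log x / (1 + x ^ 2) := by rw [hg]; rw [sub_neg_eq_add]; ring

private lemma I01' : ∫ x in Ioo (0:ℝ) 1, Real.log x / (1 + x ^ 2)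
    = -∑' k : ℕ, (-1 : ℝ) ^ k / (2 * (k : ℝ) + 1) ^ 2 := by
  set F : ℕ → ℝ → ℝ := fun k x => (-1:ℝ) ^ k * (x ^ (2*k) * Real.log x) with hFdef
  have hint : ∀ k, Integrable (F k) (volume.restrict (Ioo 0 1)) := fun k =>
    ((pow_log_integrable' (2*k)).const_mul _ : IntegrableOn (F k) (Ioo 0 1) volume)
  have hnorm : ∀ k, ∫ x in Ioo (0:ℝ) 1, ‖F k x‖ = 1 / (2 * (k:ℝ) + 1) ^ 2 := by
    intro k
    have : ∫ x in Ioo (0:ℝ) 1, ‖F k x‖ = ∫ x in Ioo (0:ℝ) 1, -(x ^ (2*k) * Real.log x) := by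
      refine setIntegral_congr_fun measurableSet_Ioo (fun x hx => ?_)
      have hlog : Real.log x ≤ 0 := (Real.log_neg hx.1 hx.2).le
      rw [hFdef]
      simp only [Real.norm_eq_abs, abs_mul, abs_pow, abs_neg, abs_one, one_pow, one_mul]
      rw [abs_of_nonneg hx.1.le, abs_of_nonpos hlog]
      ring
    rw [this, integral_neg, integral_Ioo_pow_log']
    push_cast; ring_nf
  have hsum : Summable (fun k => ∫ x in Ioo (0:ℝ) 1, ‖F k x‖) := by
    simp_rw [hnorm]; exact summable_aux'
  have key := MeasureTheory.integral_tsum_of_summable_integral_norm hint hsum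
  have h2 : ∫ x in Ioo (0:ℝ) 1, (∑' k, F k x) = ∫ x in Ioo (0:ℝ) 1, Real.log x / (1 + x ^ 2) :=
    setIntegral_congr_fun measurableSet_Ioo (fun x hx => tsum_eq_integrand' hx)
  rw [← h2, ← key, ← tsum_neg]
  congr 1; ext k
  rw [hFdef]
  simp only
  rw [integral_const_mul, integral_Ioo_pow_log']
  push_cast; ring_nf

private noncomputable def fGR : ℝ → ℝ := fun x => Real.log x / (1 + x ^ 2)

private lemma fGR_meas : Measurable fGR :=
  Real.measurable_log.div ((measurable_const.add ((measurable_id.pow_const 2))))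

private lemma fGR_int_Ioo : IntegrableOn fGR (Ioo (0:ℝ) 1) := by
  refine bound_integrable'.integrable.mono fGR_meas.aestronglyMeasurable ?_
  filter_upwards [ae_restrict_mem measurableSet_Ioo] with x hx
  have h1 : (1:ℝ) ≤ 1 + x ^ 2 := by nlinarith [sq_nonneg x]
  have h2 := abs_log_le' x hx
  rw [Real.norm_eq_abs, Real.norm_eq_abs, fGR, abs_div]
  calc |Real.log x| / |1 + x ^ 2| ≤ |Real.log x| / 1 := by
        apply div_le_div_of_nonneg_left ?_ ?_ ?_ |>.trans_eq rfl
        · exact abs_nonneg _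
        · norm_num
        · rw [abs_of_nonneg (by linarith)]; exact h1
    _ = |Real.log x| := div_one _
    _ ≤ 2 * x ^ (-(1/2):ℝ) := h2
    _ ≤ |2 * x ^ (-(1/2):ℝ)| := le_abs_self _

private lemma fGR_int_Ioi : IntegrableOn fGR (Ioi (1:ℝ)) := by
  have hb : IntegrableOn (fun x : ℝ => 2 * x ^ (-(3/2) : ℝ)) (Ioi 1) :=
    (integrableOn_Ioi_rpow_of_lt (by norm_num) one_pos).const_mul 2
  refine hb.integrable.mono fGR_meas.aestronglyMeasurable ?_
  filter_upwards [ae_restrict_mem measurableSet_Ioi] with x hx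
  have hx1 : (1:ℝ) < x := hx
  have hx0 : (0:ℝ) < x := lt_trans one_pos hx1
  have hlog : 0 ≤ Real.log x := Real.log_nonneg hx1.le
  have hlogle : Real.log x ≤ 2 * x ^ ((1/2):ℝ) := by
    have h1 : Real.log x = 2 * Real.log (x ^ ((1/2):ℝ)) := by rw [Real.log_rpow hx0]; ring
    have h2 : Real.log (x ^ ((1/2):ℝ)) ≤ x ^ ((1/2):ℝ) - 1 :=
      Real.log_le_sub_one_of_pos (Real.rpow_pos_of_pos hx0 _)
    linarith
  have hx2 : x ^ 2 ≤ 1 + x ^ 2 := by linarith [sq_nonneg x]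
  rw [Real.norm_eq_abs, Real.norm_eq_abs, fGR]
  have hden : (0:ℝ) < 1 + x ^ 2 := by positivity
  rw [abs_div, abs_of_nonneg hlog, abs_of_nonneg hden.le,
    abs_of_nonneg (by positivity : (0:ℝ) ≤ 2 * x ^ (-(3/2):ℝ))]
  have key : Real.log x / (1 + x ^ 2) ≤ (2 * x ^ ((1/2):ℝ)) / x ^ 2 :=
    div_le_div₀ (by positivity) hlogle (by positivity) hx2
  refine key.trans_eq ?_
  rw [show (x:ℝ) ^ 2 = x ^ ((2:ℝ)) by rw [← Real.rpow_natCast x 2]; norm_num,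
    mul_div_assoc, ← Real.rpow_sub hx0]
  norm_num

private lemma fGR_int_Ioc : IntegrableOn fGR (Ioc (0:ℝ) 1) := by
  have h : IntegrableOn fGR (Ioo (0:ℝ) 1 ∪ {1}) :=
    fGR_int_Ioo.union (by simp [integrableOn_singleton_iff])
  refine h.mono_set ?_
  intro y hy
  rcases eq_or_lt_of_le hy.2 with h | h
  · exact Or.inr (by simp [h])
  · exact Or.inl ⟨hy.1, h⟩

private lemma I_Ioi0' : ∫ x in Ioi (0:ℝ), fGR x = 0 := by
  have key := MeasureTheory.integral_comp_rpow_Ioi (E := ℝ) fGR (p := -1) (by norm_num)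
  have hcongr : ∫ x in Ioi (0:ℝ), (|(-1:ℝ)| * x ^ ((-1:ℝ) - 1)) • fGR (x ^ (-1:ℝ))
      = ∫ x in Ioi (0:ℝ), -fGR x := by
    refine setIntegral_congr_fun measurableSet_Ioi (fun x hx => ?_)
    have hx0 : (0:ℝ) < x := hx
    have h1 : x ^ (-1:ℝ) = x⁻¹ := by rw [Real.rpow_neg_one]
    have h2 : x ^ ((-1:ℝ) - 1) = (x ^ 2)⁻¹ := by
      rw [show ((-1:ℝ) - 1) = -(2:ℕ) by norm_num, Real.rpow_neg hx0.le, Real.rpow_natCast]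
    rw [smul_eq_mul, h1, h2, fGR]
    simp only [fGR, Real.log_inv]
    rw [abs_neg, abs_one]
    field_simp
    ring
  rw [hcongr, integral_neg] at key
  linarith

/-- GR 4.231.12: `∫_0^1 ln x/(1+x²) dx = -G`, `∫_1^∞ ln x/(1+x²) dx = G`,
and `∫_0^∞ ln x/(1+x²) dx = 0`, where `G` is Catalan's constant. -/
theorem integral_log_div_one_add_sq :
    (∫ x in (0:ℝ)..1, Real.log x / (1 + x ^ 2) =
      -∑' k : ℕ, (-1 : ℝ) ^ k / (2 * (k : ℝ) + 1) ^ 2) ∧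
    (∫ x in Set.Ioi (1:ℝ), Real.log x / (1 + x ^ 2) =
      ∑' k : ℕ, (-1 : ℝ) ^ k / (2 * (k : ℝ) + 1) ^ 2) ∧
    (∫ x in Set.Ioi (0:ℝ), Real.log x / (1 + x ^ 2) = 0) := by
  have hIoc : ∫ x in Ioc (0:ℝ) 1, Real.log x / (1 + x ^ 2)
      = -∑' k : ℕ, (-1 : ℝ) ^ k / (2 * (k : ℝ) + 1) ^ 2 := by
    rw [integral_Ioc_eq_integral_Ioo]; exact I01'
  have h1 : ∫ x in (0:ℝ)..1, Real.log x / (1 + x ^ 2)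
      = -∑' k : ℕ, (-1 : ℝ) ^ k / (2 * (k : ℝ) + 1) ^ 2 := by
    rw [intervalIntegral.integral_of_le (by norm_num)]; exact hIoc
  have hsplit : ∫ x in Ioi (0:ℝ), fGR x
      = (∫ x in Ioc (0:ℝ) 1, fGR x) + ∫ x in Ioi (1:ℝ), fGR x := by
    rw [← setIntegral_union (Ioc_disjoint_Ioi le_rfl) measurableSet_Ioi
      fGR_int_Ioc fGR_int_Ioi, Ioc_union_Ioi_eq_Ioi one_pos.le]
  have h3 : ∫ x in Set.Ioi (0:ℝ), Real.log x / (1 + x ^ 2) = 0 := I_Ioi0'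
  refine ⟨h1, ?_, h3⟩
  have := hsplit
  rw [I_Ioi0'] at this
  have hIoc' : ∫ x in Ioc (0:ℝ) 1, fGR x
      = -∑' k : ℕ, (-1 : ℝ) ^ k / (2 * (k : ℝ) + 1) ^ 2 := hIoc
  have : ∫ x in Ioi (1:ℝ), fGR x = ∑' k : ℕ, (-1 : ℝ) ^ k / (2 * (k : ℝ) + 1) ^ 2 := by
    rw [hIoc'] at this; linarith
  exact this
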